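/- arXiv:1002.3902 — 2 statements merged into one kernel-verified Lean document; each statement's English description precedes it below -/
import Mathlib

section
/- Let 1 < p < ∞, let Y and X be real Banach spaces, and let T ∈ Π_p(Y,X) have dense range (the closure of T(Y) equals X). Then T belongs to the closure of the finite rank operators Y*⊗X in the topology τ_p of π_p-compact convergence if and only if T belongs to the τ_p-closure of the set {T∘R : R ∈ Y*⊗Y a finite rank operator on Y}. -/
/- Common definitions: absolutely p-summing operators, the π_p norm, quasi-p-nuclear
operators, finite rank operators, the auxiliary spaces Y_K (span of a compact absolutely
convex set K with the gauge norm, realized here through its dual ball), the seminorms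
U ↦ π_p(U ∘ Φ_K) generating the topology τ_p of π_p-compact convergence (this family of
seminorms is directed, so membership in a τ_p-closure can be tested against one K at a
time), representations of elements of the completed tensor product X*⊗̂_q Y, and
reflexivity of a normed space. -/

open NormedSpace
open scoped ENNReal

noncomputable section

section Defs

variable {Y X : Type*} [NormedAddCommGroup Y] [NormedSpace ℝ Y]
  [NormedAddCommGroup X] [NormedSpace ℝ X]

/-- The weak `ℓ^p`-norm of a finite family `y` in `Y`:
`sup { (∑ |⟨y i, f⟩|^p)^(1/p) : f ∈ Y*, ‖f‖ ≤ 1 }`. -/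
def weakLpNorm (p : ℝ) {n : ℕ} (y : Fin n → Y) : ℝ :=
  sSup {r | ∃ f : StrongDual ℝ Y, ‖f‖ ≤ 1 ∧ r = (∑ i, |f (y i)| ^ p) ^ (1 / p)}

/-- `T` is absolutely `p`-summing with constant `C`. -/
def PSummingLE (p : ℝ) (T : Y →L[ℝ] X) (C : ℝ) : Prop :=
  ∀ (n : ℕ) (y : Fin n → Y), (∑ i, ‖T (y i)‖ ^ p) ^ (1 / p) ≤ C * weakLpNorm p y

/-- `T` is absolutely `p`-summing. -/
def IsPSumming (p : ℝ) (T : Y →L[ℝ] X) : Prop :=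
  ∃ C : ℝ, 0 ≤ C ∧ PSummingLE p T C

/-- The `p`-summing norm `π_p(T)` (the least admissible constant). -/
def piNorm (p : ℝ) (T : Y →L[ℝ] X) : ℝ :=
  sInf {C | 0 ≤ C ∧ PSummingLE p T C}

/-- `T` is quasi-`p`-nuclear: `‖T y‖^p ≤ ∑ |⟨y, y'_n⟩|^p` with `∑ ‖y'_n‖^p < ∞`. -/
def IsQuasiPNuclear (p : ℝ) (T : Y →L[ℝ] X) : Prop :=
  ∃ g : ℕ → StrongDual ℝ Y, Summable (fun n => ‖g n‖ ^ p) ∧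
    ∀ y : Y, ‖T y‖ ^ p ≤ ∑' n, |g n y| ^ p

/-- `T` has finite rank; `{A | IsFiniteRank A}` plays the role of `Y*⊗X`. -/
def IsFiniteRank (T : Y →L[ℝ] X) : Prop :=
  FiniteDimensional ℝ (LinearMap.range (T : Y →ₗ[ℝ] X))

/-- `K` is a compact absolutely convex (convex and balanced) subset. -/
def IsCompactAbsConvex (K : Set Y) : Prop :=
  IsCompact K ∧ Convex ℝ K ∧ Balanced ℝ K

/-- The unit ball of the dual of `Y_K` (the span of `K` with the gauge norm of `K`):
linear functionals on the span of `K` bounded by `1` on `K`. -/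
def KDualBall (K : Set Y) : Set (Submodule.span ℝ K →ₗ[ℝ] ℝ) :=
  {w | ∀ x : Submodule.span ℝ K, (x : Y) ∈ K → |w x| ≤ 1}

/-- The weak `ℓ^p`-norm of a finite family of elements of `Y_K`. -/
def weakLpNormK (p : ℝ) (K : Set Y) {n : ℕ} (a : Fin n → Submodule.span ℝ K) : ℝ :=
  sSup {r | ∃ w ∈ KDualBall K, r = (∑ i, |w (a i)| ^ p) ^ (1 / p)}

/-- `U ∘ Φ_K : Y_K → X` is absolutely `p`-summing with constant `C`. -/
def PSummingOnKLE (p : ℝ) (K : Set Y) (U : Y →L[ℝ] X) (C : ℝ) : Prop :=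
  ∀ (n : ℕ) (a : Fin n → Submodule.span ℝ K),
    (∑ i, ‖U (a i : Y)‖ ^ p) ^ (1 / p) ≤ C * weakLpNormK p K a

/-- `piNormOnK p K U = π_p(U ∘ Φ_K)`, where `Φ_K : Y_K → Y` is the canonical inclusion.
These are the seminorms generating the topology `τ_p` of `π_p`-compact convergence. -/
def piNormOnK (p : ℝ) (K : Set Y) (U : Y →L[ℝ] X) : ℝ :=
  sInf {C | 0 ≤ C ∧ PSummingOnKLE p K U C}

/-- `T` belongs to the closure of `S` in the topology `τ_p` of `π_p`-compact convergence.
(The family of seminorms `π_p(· ∘ Φ_K)` is directed in `K`, so it suffices to test one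
compact absolutely convex set `K` at a time.) -/
def MemTauPClosure (p : ℝ) (S : Set (Y →L[ℝ] X)) (T : Y →L[ℝ] X) : Prop :=
  ∀ K : Set Y, IsCompactAbsConvex K → ∀ ε : ℝ, 0 < ε →
    ∃ A ∈ S, piNormOnK p K (T - A) < ε

/-- `T` belongs to the closure of the finite rank operators in the `π_p`-norm
(within `Π_p(Y,X)`). -/
def MemPiNormClosureFR (p : ℝ) (T : Y →L[ℝ] X) : Prop :=
  IsPSumming p T ∧ ∀ ε : ℝ, 0 < ε →
    ∃ A : Y →L[ℝ] X, IsFiniteRank A ∧ piNorm p (T - A) < ε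

/-- The scalar sequence `c` lies in the ball of radius `D` of weak-`ℓ^r`, `r ∈ [1,∞]`. -/
def lqBound (r : ℝ≥0∞) (c : ℕ → ℝ) (D : ℝ) : Prop :=
  (r = ∞ ∧ ∀ n, |c n| ≤ D) ∨
  (r ≠ ∞ ∧ ∀ s : Finset ℕ, ∑ n ∈ s, |c n| ^ r.toReal ≤ D)

/-- A normed space is reflexive if the canonical embedding into its double dual is onto. -/
def IsReflexiveSpace (X : Type*) [NormedAddCommGroup X] [NormedSpace ℝ X] : Prop :=
  Function.Surjective (inclusionInDoubleDual ℝ X)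

/-- `X` has the (Grothendieck) approximation property. -/
def HasAP (X : Type*) [NormedAddCommGroup X] [NormedSpace ℝ X] : Prop :=
  ∀ K : Set X, IsCompact K → ∀ ε : ℝ, 0 < ε →
    ∃ R : X →L[ℝ] X, IsFiniteRank R ∧ ∀ x ∈ K, ‖R x - x‖ ≤ ε

/-- `H` has a Schauder basis. -/
def HasSchauderBasis (H : Type*) [NormedAddCommGroup H] [NormedSpace ℝ H] : Prop :=
  ∃ e : ℕ → H, ∀ x : H, ∃! c : ℕ → ℝ,
    Filter.Tendsto (fun N => ∑ n ∈ Finset.range N, c n • e n) Filter.atTop (nhds x)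

end Defs

/-- A representation `∑ x'_n ⊗ y_n` of an element of the completed tensor product
`X*⊗̂_q Y`: here `∑ ‖x'_n‖^q < ∞` and `(y_n)` is weakly `q'`-summable, where `q'` is the
conjugate exponent of `q`. -/
structure TensorRep (q : ℝ) (q' : ℝ≥0∞) (X Y : Type*) [NormedAddCommGroup X]
    [NormedSpace ℝ X] [NormedAddCommGroup Y] [NormedSpace ℝ Y] where
  a : ℕ → StrongDual ℝ X
  b : ℕ → Y
  summable_a : Summable fun n => ‖a n‖ ^ q
  weak_b : ∃ D : ℝ, ∀ g : StrongDual ℝ Y, ‖g‖ ≤ 1 → lqBound q' (fun n => g (b n)) D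

namespace TensorRep

variable {q : ℝ} {q' : ℝ≥0∞} {X Y : Type*} [NormedAddCommGroup X] [NormedSpace ℝ X]
  [NormedAddCommGroup Y] [NormedSpace ℝ Y]

/-- The value at `x` of the operator `X → Y` canonically induced by the tensor element
(the canonical map `j : X*⊗̂_q Y → N_q(X,Y) ⊆ L(X,Y)`). -/
def app (z : TensorRep q q' X Y) (x : X) : Y :=
  ∑' n, z.a n x • z.b n

/-- `trace U∘z = ∑ ⟨U y_n, x'_n⟩` for `U : Y → X`. -/
def traceWith (z : TensorRep q q' X Y) (U : Y →L[ℝ] X) : ℝ :=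
  ∑' n, z.a n (U (z.b n))

/-- `trace U∘z = ∑ ⟨U y_n, x'_n⟩` for `U : Y → X**`. -/
def traceBidual (z : TensorRep q q' X Y) (U : Y →L[ℝ] StrongDual ℝ (StrongDual ℝ X)) : ℝ :=
  ∑' n, U (z.b n) (z.a n)

/-- `z` represents the zero element of `X*⊗̂_q Y`.  By the Persson–Pietsch–Saphar duality
`(X*⊗̂_q Y)* = Π_{q'}(Y, X**)` (with `r = q'` the conjugate exponent of `q`), an element is
zero iff every absolutely `q'`-summing operator `U : Y → X**` gives `trace U∘z = 0`. -/
def IsZeroElem (r : ℝ) (z : TensorRep q q' X Y) : Prop :=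
  ∀ U : Y →L[ℝ] StrongDual ℝ (StrongDual ℝ X), IsPSumming (X := StrongDual ℝ (StrongDual ℝ X)) r U → z.traceBidual U = 0

end TensorRep


section Helpers

variable {Y X : Type*} [NormedAddCommGroup Y] [NormedSpace ℝ Y]
  [NormedAddCommGroup X] [NormedSpace ℝ X] {p : ℝ}

lemma kdual_bound {K : Set Y} (a : Submodule.span ℝ K) :
    ∃ B : ℝ, 0 ≤ B ∧ ∀ w ∈ KDualBall K, |w a| ≤ B := by
  obtain ⟨x, hx⟩ := a
  induction hx using Submodule.span_induction with
  | mem x h => exact ⟨1, zero_le_one, fun w hw => hw _ h⟩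
  | zero =>
      refine ⟨0, le_refl _, fun w hw => ?_⟩
      show |w 0| ≤ 0
      simp
  | add x y hx hy ihx ihy =>
      obtain ⟨B1, hB1, h1⟩ := ihx
      obtain ⟨B2, hB2, h2⟩ := ihy
      refine ⟨B1 + B2, by positivity, fun w hw => ?_⟩
      show |w ((⟨x, hx⟩ : Submodule.span ℝ K) + ⟨y, hy⟩)| ≤ B1 + B2
      rw [map_add]
      exact (abs_add_le _ _).trans (add_le_add (h1 w hw) (h2 w hw))
  | smul c x hx ih =>
      obtain ⟨B, hB, h1⟩ := ih
      refine ⟨|c| * B, by positivity, fun w hw => ?_⟩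
      show |w (c • (⟨x, hx⟩ : Submodule.span ℝ K))| ≤ |c| * B
      rw [map_smul, smul_eq_mul, abs_mul]
      exact mul_le_mul_of_nonneg_left (h1 w hw) (abs_nonneg c)

lemma weakK_bddAbove (hp : 1 < p) (K : Set Y) {n : ℕ} (a : Fin n → Submodule.span ℝ K) :
    BddAbove {r | ∃ w ∈ KDualBall K, r = (∑ i, |w (a i)| ^ p) ^ (1 / p)} := by
  choose B hB0 hB using fun i => kdual_bound (K := K) (a i)
  refine ⟨(∑ i, B i ^ p) ^ (1 / p), ?_⟩
  rintro r ⟨w, hw, rfl⟩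
  exact Real.rpow_le_rpow
    (Finset.sum_nonneg fun i _ => Real.rpow_nonneg (abs_nonneg _) _)
    (Finset.sum_le_sum fun i _ =>
      Real.rpow_le_rpow (abs_nonneg _) (hB i w hw) (by linarith))
    (by positivity)

lemma le_weakK (hp : 1 < p) {K : Set Y} {n : ℕ} (a : Fin n → Submodule.span ℝ K)
    {w : Submodule.span ℝ K →ₗ[ℝ] ℝ} (hw : w ∈ KDualBall K) :
    (∑ i, |w (a i)| ^ p) ^ (1 / p) ≤ weakLpNormK p K a :=
  le_csSup (weakK_bddAbove hp K a) ⟨w, hw, rfl⟩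

lemma weakK_nonneg (hp : 1 < p) (K : Set Y) {n : ℕ} (a : Fin n → Submodule.span ℝ K) :
    0 ≤ weakLpNormK p K a := by
  have h0 : (0 : Submodule.span ℝ K →ₗ[ℝ] ℝ) ∈ KDualBall K := fun x _ => by simp
  have := le_weakK hp a h0
  simpa [Real.zero_rpow (show p ≠ 0 by positivity),
    Real.zero_rpow (show p⁻¹ ≠ 0 by positivity),
    Real.zero_rpow (show 1 / p ≠ 0 by positivity)] using this

lemma rpow_pull (hp : 1 < p) {c : ℝ} (hc : 0 ≤ c) {n : ℕ} (g : Fin n → ℝ) :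
    (∑ i, (c * |g i|) ^ p) ^ (1 / p) = c * (∑ i, |g i| ^ p) ^ (1 / p) := by
  have hp0 : (0 : ℝ) < p := by linarith
  have hS : 0 ≤ ∑ i, |g i| ^ p :=
    Finset.sum_nonneg fun i _ => Real.rpow_nonneg (abs_nonneg _) _
  have h1 : ∀ i : Fin n, (c * |g i|) ^ p = c ^ p * |g i| ^ p := fun i =>
    Real.mul_rpow hc (abs_nonneg _)
  simp_rw [h1, ← Finset.mul_sum]
  rw [Real.mul_rpow (Real.rpow_nonneg hc _) hS, ← Real.rpow_mul hc,
    mul_one_div_cancel (ne_of_gt hp0), Real.rpow_one]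

lemma psummingOnK_zero (hp : 1 < p) (K : Set Y) :
    PSummingOnKLE p K (0 : Y →L[ℝ] X) 0 := by
  intro n a
  have h1 : ∀ i : Fin n, ‖(0 : Y →L[ℝ] X) ((a i : Y))‖ ^ p = 0 := fun i => by
    simp [Real.zero_rpow (show p ≠ 0 by positivity)]
  simp only [h1, Finset.sum_const_zero, zero_mul]
  rw [Real.zero_rpow (show 1 / p ≠ 0 by positivity)]

lemma psummingOnK_add (hp : 1 < p) {K : Set Y} {U V : Y →L[ℝ] X} {C D : ℝ}
    (hU : PSummingOnKLE p K U C) (hV : PSummingOnKLE p K V D) :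
    PSummingOnKLE p K (U + V) (C + D) := by
  intro n a
  have h1 : (∑ i, ‖(U + V) ((a i : Y))‖ ^ p) ^ (1 / p)
      ≤ (∑ i, (‖U ((a i : Y))‖ + ‖V ((a i : Y))‖) ^ p) ^ (1 / p) :=
    Real.rpow_le_rpow
      (Finset.sum_nonneg fun i _ => Real.rpow_nonneg (norm_nonneg _) _)
      (Finset.sum_le_sum fun i _ =>
        Real.rpow_le_rpow (norm_nonneg _)
          (by simpa using norm_add_le (U ((a i : Y))) (V ((a i : Y)))) (by linarith))
      (by positivity)
  have h2 := Real.Lp_add_le_of_nonneg (s := Finset.univ)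
    (f := fun i => ‖U ((a i : Y))‖) (g := fun i => ‖V ((a i : Y))‖) (le_of_lt hp)
    (fun i _ => norm_nonneg _) (fun i _ => norm_nonneg _)
  calc (∑ i, ‖(U + V) ((a i : Y))‖ ^ p) ^ (1 / p)
      ≤ (∑ i, (‖U ((a i : Y))‖ + ‖V ((a i : Y))‖) ^ p) ^ (1 / p) := h1
    _ ≤ (∑ i, ‖U ((a i : Y))‖ ^ p) ^ (1 / p) + (∑ i, ‖V ((a i : Y))‖ ^ p) ^ (1 / p) := h2
    _ ≤ C * weakLpNormK p K a + D * weakLpNormK p K a := add_le_add (hU n a) (hV n a)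
    _ = (C + D) * weakLpNormK p K a := by ring

lemma psummingOnK_neg {K : Set Y} {U : Y →L[ℝ] X} {C : ℝ}
    (h : PSummingOnKLE p K U C) : PSummingOnKLE p K (-U) C := by
  intro n a
  simpa using h n a

lemma psummingOnK_sub (hp : 1 < p) {K : Set Y} {U V : Y →L[ℝ] X} {C D : ℝ}
    (hU : PSummingOnKLE p K U C) (hV : PSummingOnKLE p K V D) :
    PSummingOnKLE p K (U - V) (C + D) := by
  rw [sub_eq_add_neg]
  exact psummingOnK_add hp hU (psummingOnK_neg hV)

lemma psummingOnK_sum (hp : 1 < p) {K : Set Y} {ι : Type*} (s : Finset ι)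
    (U : ι → Y →L[ℝ] X) (C : ι → ℝ) (h : ∀ i ∈ s, PSummingOnKLE p K (U i) (C i)) :
    PSummingOnKLE p K (∑ i ∈ s, U i) (∑ i ∈ s, C i) := by
  induction s using Finset.cons_induction with
  | empty => simpa using psummingOnK_zero hp K
  | cons i s hi ih =>
      rw [Finset.sum_cons, Finset.sum_cons]
      exact psummingOnK_add hp (h i (Finset.mem_cons_self i s))
        (ih fun j hj => h j (Finset.mem_cons_of_mem hj))

lemma scaled_mem_kdual {K : Set Y} (g : Y →L[ℝ] ℝ) {c : ℝ} (hc : 0 < c)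
    (h : ∀ y ∈ K, |g y| ≤ c) :
    c⁻¹ • ((g : Y →ₗ[ℝ] ℝ).comp (Submodule.span ℝ K).subtype) ∈ KDualBall K := by
  intro z hz
  have h1 : (c⁻¹ • ((g : Y →ₗ[ℝ] ℝ).comp (Submodule.span ℝ K).subtype)) z
      = c⁻¹ * g (z : Y) := by
    simp [LinearMap.smul_apply, smul_eq_mul]
  rw [h1, abs_mul, abs_of_nonneg (inv_nonneg.2 hc.le)]
  calc c⁻¹ * |g (z : Y)| ≤ c⁻¹ * c :=
        mul_le_mul_of_nonneg_left (h _ hz) (inv_nonneg.2 hc.le)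
    _ = 1 := inv_mul_cancel₀ (ne_of_gt hc)

lemma abs_apply_scaled {K : Set Y} (g : Y →L[ℝ] ℝ) {c : ℝ} (hc : 0 < c)
    (a : Submodule.span ℝ K) :
    |g (a : Y)| = c * |(c⁻¹ • ((g : Y →ₗ[ℝ] ℝ).comp (Submodule.span ℝ K).subtype)) a| := by
  have h1 : (c⁻¹ • ((g : Y →ₗ[ℝ] ℝ).comp (Submodule.span ℝ K).subtype)) a
      = c⁻¹ * g (a : Y) := by
    simp [LinearMap.smul_apply, smul_eq_mul]
  rw [h1, abs_mul, abs_of_nonneg (inv_nonneg.2 hc.le), ← mul_assoc,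
    mul_inv_cancel₀ (ne_of_gt hc), one_mul]

lemma psummingOnK_smulRight (hp : 1 < p) {K : Set Y} (f : Y →L[ℝ] ℝ) (x : X) {M : ℝ}
    (hM : 0 ≤ M) (hfK : ∀ y ∈ K, |f y| ≤ M) :
    PSummingOnKLE p K (f.smulRight x) ((M + 1) * ‖x‖) := by
  intro n a
  have hM1 : (0 : ℝ) < M + 1 := by linarith
  set w : Submodule.span ℝ K →ₗ[ℝ] ℝ :=
    (M + 1)⁻¹ • ((f : Y →ₗ[ℝ] ℝ).comp (Submodule.span ℝ K).subtype) with hwdef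
  have hw : w ∈ KDualBall K :=
    scaled_mem_kdual f hM1 fun y hy => (hfK y hy).trans (by linarith)
  have key : ∀ i : Fin n, |f ((a i : Y))| = (M + 1) * |w (a i)| := fun i =>
    abs_apply_scaled f hM1 (a i)
  have hnorm : ∀ i : Fin n, ‖(f.smulRight x) ((a i : Y))‖ = ‖x‖ * |f ((a i : Y))| := by
    intro i
    rw [ContinuousLinearMap.smulRight_apply, norm_smul, Real.norm_eq_abs, mul_comm]
  calc (∑ i, ‖(f.smulRight x) ((a i : Y))‖ ^ p) ^ (1 / p)
      = (∑ i, (‖x‖ * |f ((a i : Y))|) ^ p) ^ (1 / p) := by simp_rw [hnorm]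
    _ = ‖x‖ * (∑ i, |f ((a i : Y))| ^ p) ^ (1 / p) := rpow_pull hp (norm_nonneg x) _
    _ = ‖x‖ * (∑ i, ((M + 1) * |w (a i)|) ^ p) ^ (1 / p) := by simp_rw [key]
    _ = ‖x‖ * ((M + 1) * (∑ i, |w (a i)| ^ p) ^ (1 / p)) := by
        rw [rpow_pull hp (le_of_lt hM1)]
    _ ≤ ‖x‖ * ((M + 1) * weakLpNormK p K a) :=
        mul_le_mul_of_nonneg_left
          (mul_le_mul_of_nonneg_left (le_weakK hp a hw) (le_of_lt hM1)) (norm_nonneg x)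
    _ = ((M + 1) * ‖x‖) * weakLpNormK p K a := by ring

lemma psummingOnK_of_global (hp : 1 < p) {K : Set Y} {T : Y →L[ℝ] X} {C r : ℝ}
    (hC : 0 ≤ C) (hr : 0 < r) (hKr : ∀ y ∈ K, ‖y‖ ≤ r) (h : PSummingLE p T C) :
    PSummingOnKLE p K T (C * r) := by
  intro n a
  have hweak : weakLpNorm p (fun i => ((a i : Y))) ≤ r * weakLpNormK p K a := by
    unfold weakLpNorm
    apply Real.sSup_le
    · rintro s ⟨f, hf, rfl⟩
      have hfr : ∀ y ∈ K, |f y| ≤ r := by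
        intro y hy
        calc |f y| = ‖f y‖ := (Real.norm_eq_abs _).symm
          _ ≤ ‖f‖ * ‖y‖ := f.le_opNorm y
          _ ≤ 1 * r := mul_le_mul hf (hKr y hy) (norm_nonneg _) zero_le_one
          _ = r := one_mul r
      set w := r⁻¹ • ((f : Y →ₗ[ℝ] ℝ).comp (Submodule.span ℝ K).subtype) with hwdef
      have hw : w ∈ KDualBall K := scaled_mem_kdual f hr hfr
      have key : ∀ i : Fin n, |f ((a i : Y))| = r * |w (a i)| := fun i =>
        abs_apply_scaled f hr (a i)
      calc (∑ i, |f ((a i : Y))| ^ p) ^ (1 / p)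
          = (∑ i, (r * |w (a i)|) ^ p) ^ (1 / p) := by simp_rw [key]
        _ = r * (∑ i, |w (a i)| ^ p) ^ (1 / p) := rpow_pull hp (le_of_lt hr) _
        _ ≤ r * weakLpNormK p K a :=
            mul_le_mul_of_nonneg_left (le_weakK hp a hw) (le_of_lt hr)
    · exact mul_nonneg (le_of_lt hr) (weakK_nonneg hp K a)
  calc (∑ i, ‖T ((a i : Y))‖ ^ p) ^ (1 / p)
      ≤ C * weakLpNorm p (fun i => ((a i : Y))) := h n _
    _ ≤ C * (r * weakLpNormK p K a) := mul_le_mul_of_nonneg_left hweak hC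
    _ = (C * r) * weakLpNormK p K a := by ring

lemma piNormOnK_le {K : Set Y} {U : Y →L[ℝ] X} {C : ℝ} (hC : 0 ≤ C)
    (h : PSummingOnKLE p K U C) : piNormOnK p K U ≤ C :=
  csInf_le ⟨0, fun c hc => hc.1⟩ ⟨hC, h⟩

lemma exists_const_of_piNormOnK_lt {K : Set Y} {U : Y →L[ℝ] X} {ε : ℝ}
    (hne : ∃ C, 0 ≤ C ∧ PSummingOnKLE p K U C) (h : piNormOnK p K U < ε) :
    ∃ C, 0 ≤ C ∧ PSummingOnKLE p K U C ∧ C < ε := by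
  obtain ⟨C0, hC0⟩ := hne
  obtain ⟨C, hCmem, hClt⟩ := exists_lt_of_csInf_lt ⟨C0, hC0⟩ h
  exact ⟨C, hCmem.1, hCmem.2, hClt⟩

lemma finiteRank_rep (A : Y →L[ℝ] X) (hA : IsFiniteRank A) :
    ∃ (m : ℕ) (f : Fin m → (Y →L[ℝ] ℝ)) (x : Fin m → X),
      ∀ y : Y, A y = ∑ i, f i y • x i := by
  haveI : FiniteDimensional ℝ (LinearMap.range (A : Y →ₗ[ℝ] X)) := hA
  set V := LinearMap.range (A : Y →ₗ[ℝ] X) with hV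
  let b := Module.finBasis ℝ V
  let A' : Y →L[ℝ] V := A.codRestrict V fun y => LinearMap.mem_range_self _ y
  refine ⟨Module.finrank ℝ V,
    fun i => (LinearMap.toContinuousLinearMap (b.coord i)).comp A',
    fun i => (b i : X), fun y => ?_⟩
  have h1 : A y = ((A' y : V) : X) := rfl
  rw [h1, ← b.sum_repr (A' y)]
  simp [Module.Basis.coord_apply]
  exact (congrArg Subtype.val (b.sum_repr (A' y))).symm.trans
    (by rw [Submodule.coe_sum]; rfl)

end Helpers

/-- Proposition 1.7.  For `T ∈ Π_p(Y,X)` with dense range, `T` is in the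
`τ_p`-closure of the finite rank operators `Y*⊗X` iff `T` is in the `τ_p`-closure of
`{T∘R : R ∈ Y*⊗Y}`. -/
theorem statement4 (p : ℝ) (hp : 1 < p)
    (Y : Type*) [NormedAddCommGroup Y] [NormedSpace ℝ Y] [CompleteSpace Y]
    (X : Type*) [NormedAddCommGroup X] [NormedSpace ℝ X] [CompleteSpace X]
    (T : Y →L[ℝ] X) (hT : IsPSumming p T) (hdense : DenseRange T) :
    MemTauPClosure p {A : Y →L[ℝ] X | IsFiniteRank A} T
      ↔ MemTauPClosure p
          {A : Y →L[ℝ] X | ∃ R : Y →L[ℝ] Y, IsFiniteRank R ∧ A = T.comp R} T := by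
  have hp0 : (0 : ℝ) < p := by linarith
  constructor
  · intro h K hK ε hε
    obtain ⟨A, hAfr, hA⟩ := h K hK (ε / 2) (by linarith)
    obtain ⟨m, f, x, hrep⟩ := finiteRank_rep A hAfr
    obtain ⟨r0, hr0⟩ := hK.1.isBounded.exists_norm_le
    set r : ℝ := max r0 1 with hrdef
    have hr1 : (0 : ℝ) < r := lt_of_lt_of_le one_pos (le_max_right _ _)
    have hKr : ∀ y ∈ K, ‖y‖ ≤ r := fun y hy => (hr0 y hy).trans (le_max_left _ _)
    set M : Fin m → ℝ := fun i => ‖f i‖ * r with hMdef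
    have hM0 : ∀ i, 0 ≤ M i := fun i => mul_nonneg (norm_nonneg _) (le_of_lt hr1)
    have hfK : ∀ i, ∀ y ∈ K, |f i y| ≤ M i := by
      intro i y hy
      calc |f i y| = ‖f i y‖ := (Real.norm_eq_abs _).symm
        _ ≤ ‖f i‖ * ‖y‖ := (f i).le_opNorm y
        _ ≤ ‖f i‖ * r := mul_le_mul_of_nonneg_left (hKr y hy) (norm_nonneg _)
    set S0 : ℝ := ∑ i, (M i + 1) with hS0def
    have hS00 : 0 ≤ S0 := Finset.sum_nonneg fun i _ => by linarith [hM0 i]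
    set δ : ℝ := ε / (2 * (S0 + 1)) with hδdef
    have hδ : 0 < δ := div_pos hε (by linarith)
    choose y hy using fun i : Fin m => hdense.exists_dist_lt (x i) hδ
    set R : Y →L[ℝ] Y := ∑ i, (f i).smulRight (y i) with hRdef
    have hRfr : IsFiniteRank R := by
      have hle : LinearMap.range (R : Y →ₗ[ℝ] Y) ≤ Submodule.span ℝ (Set.range y) := by
        rintro v ⟨u, rfl⟩
        have hRu : R u = ∑ i, f i u • y i := by
          simp [hRdef, ContinuousLinearMap.sum_apply]
        rw [show (R : Y →ₗ[ℝ] Y) u = R u from rfl, hRu]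
        exact Submodule.sum_mem _ fun i _ =>
          Submodule.smul_mem _ _ (Submodule.subset_span ⟨i, rfl⟩)
      haveI : FiniteDimensional ℝ (Submodule.span ℝ (Set.range y)) :=
        FiniteDimensional.span_of_finite ℝ (Set.finite_range y)
      exact Submodule.finiteDimensional_of_le hle
    refine ⟨T.comp R, ⟨R, hRfr, rfl⟩, ?_⟩
    have hAeq : A = ∑ i, (f i).smulRight (x i) := by
      ext u
      simp [hrep u, ContinuousLinearMap.sum_apply]
    have hdiff : A - T.comp R = ∑ i, (f i).smulRight (x i - T (y i)) := by
      ext u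
      simp [hrep u, hRdef, ContinuousLinearMap.sum_apply, map_sum, map_smul, smul_sub,
        Finset.sum_sub_distrib]
    obtain ⟨CT, hCT0, hCT⟩ := hT
    have hTA_ne : ∃ C, 0 ≤ C ∧ PSummingOnKLE p K (T - A) C := by
      refine ⟨CT * r + ∑ i, (M i + 1) * ‖x i‖, ?_, ?_⟩
      · have : 0 ≤ ∑ i, (M i + 1) * ‖x i‖ :=
          Finset.sum_nonneg fun i _ =>
            mul_nonneg (by linarith [hM0 i]) (norm_nonneg _)
        have : 0 ≤ CT * r := mul_nonneg hCT0 (le_of_lt hr1)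
        positivity
      · have hTK : PSummingOnKLE p K T (CT * r) :=
          psummingOnK_of_global hp hCT0 hr1 hKr hCT
        have hAK : PSummingOnKLE p K A (∑ i, (M i + 1) * ‖x i‖) := by
          rw [hAeq]
          exact psummingOnK_sum hp _ _ _ fun i _ =>
            psummingOnK_smulRight hp (f i) (x i) (hM0 i) (hfK i)
        exact psummingOnK_sub hp hTK hAK
    obtain ⟨C1, hC10, hC1sum, hC1lt⟩ := exists_const_of_piNormOnK_lt hTA_ne hA
    have h2 : PSummingOnKLE p K (A - T.comp R) (∑ i, (M i + 1) * ‖x i - T (y i)‖) := by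
      rw [hdiff]
      exact psummingOnK_sum hp _ _ _ fun i _ =>
        psummingOnK_smulRight hp (f i) _ (hM0 i) (hfK i)
    have hS2 : ∑ i, (M i + 1) * ‖x i - T (y i)‖ ≤ ε / 2 := by
      have hterm : ∀ i : Fin m, (M i + 1) * ‖x i - T (y i)‖ ≤ (M i + 1) * δ := by
        intro i
        apply mul_le_mul_of_nonneg_left _ (by linarith [hM0 i])
        rw [← dist_eq_norm]
        exact le_of_lt (hy i)
      calc ∑ i, (M i + 1) * ‖x i - T (y i)‖ ≤ ∑ i, (M i + 1) * δ :=
            Finset.sum_le_sum fun i _ => hterm i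
        _ = S0 * δ := by rw [← Finset.sum_mul]
        _ ≤ (S0 + 1) * δ := mul_le_mul_of_nonneg_right (by linarith) (le_of_lt hδ)
        _ = ε / 2 := by
            rw [hδdef]
            field_simp
    have hS20 : 0 ≤ ∑ i, (M i + 1) * ‖x i - T (y i)‖ :=
      Finset.sum_nonneg fun i _ => mul_nonneg (by linarith [hM0 i]) (norm_nonneg _)
    have h3 : PSummingOnKLE p K (T - T.comp R)
        (C1 + ∑ i, (M i + 1) * ‖x i - T (y i)‖) := by
      have := psummingOnK_add hp hC1sum h2
      rwa [sub_add_sub_cancel] at this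
    calc piNormOnK p K (T - T.comp R) ≤ C1 + ∑ i, (M i + 1) * ‖x i - T (y i)‖ :=
          piNormOnK_le (by linarith) h3
      _ < ε / 2 + ε / 2 := add_lt_add_of_lt_of_le hC1lt hS2
      _ = ε := by ring
  · intro h K hK ε hε
    obtain ⟨A, ⟨R, hRfr, hAeq⟩, hA⟩ := h K hK ε hε
    refine ⟨A, ?_, hA⟩
    subst hAeq
    show IsFiniteRank (T.comp R)
    unfold IsFiniteRank
    rw [ContinuousLinearMap.toLinearMap_comp, LinearMap.range_comp]
    haveI : FiniteDimensional ℝ (LinearMap.range (R : Y →ₗ[ℝ] Y)) := hRfr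
    infer_instance
end
end

section
/- If a real Banach space X has the approximation property of Grothendieck, then for every p with 1 < p < ∞ and every Banach space Y the canonical map Y*⊗̂_p X → N_p(Y,X) is injective. -/
/- Common definitions: absolutely p-summing operators, the π_p norm, quasi-p-nuclear
operators, finite rank operators, the auxiliary spaces Y_K (span of a compact absolutely
convex set K with the gauge norm, realized here through its dual ball), the seminorms
U ↦ π_p(U ∘ Φ_K) generating the topology τ_p of π_p-compact convergence (this family of
seminorms is directed, so membership in a τ_p-closure can be tested against one K at a
time), representations of elements of the completed tensor product X*⊗̂_q Y, and
reflexivity of a normed space. -/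

open NormedSpace
open scoped ENNReal

noncomputable section

universe u

set_option maxHeartbeats 2000000

section AuxLemmas

open Filter Finset

/-- Hölder bound for finite sums, with uniform bounds on both factors. -/
lemma aux_holder_finset {p q : ℝ} (hpq : p.HolderConjugate q) (v u : ℕ → ℝ)
    (hv0 : ∀ n, 0 ≤ v n) (hu0 : ∀ n, 0 ≤ u n) {B A : ℝ}
    (hv : ∀ s : Finset ℕ, ∑ n ∈ s, v n ^ q ≤ B)
    (hu : ∀ s : Finset ℕ, ∑ n ∈ s, u n ^ p ≤ A) :
    ∀ s : Finset ℕ, ∑ n ∈ s, v n * u n ≤ B ^ (1/q) * A ^ (1/p) := by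
  intro s
  have hB0 : 0 ≤ B := le_trans (by simp) (hv ∅)
  have hA0 : 0 ≤ A := le_trans (by simp) (hu ∅)
  have h1 : ∑ n ∈ s, u n * v n ≤
      (∑ n ∈ s, u n ^ p) ^ (1/p) * (∑ n ∈ s, v n ^ q) ^ (1/q) :=
    Real.inner_le_Lp_mul_Lq_of_nonneg s hpq (fun i _ => hu0 i) (fun i _ => hv0 i)
  have h2 : (∑ n ∈ s, u n ^ p) ^ (1/p) ≤ A ^ (1/p) :=
    Real.rpow_le_rpow (Finset.sum_nonneg fun i _ => Real.rpow_nonneg (hu0 i) _) (hu s)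
      hpq.one_div_nonneg
  have h3 : (∑ n ∈ s, v n ^ q) ^ (1/q) ≤ B ^ (1/q) :=
    Real.rpow_le_rpow (Finset.sum_nonneg fun i _ => Real.rpow_nonneg (hv0 i) _) (hv s)
      hpq.symm.one_div_nonneg
  calc ∑ n ∈ s, v n * u n = ∑ n ∈ s, u n * v n := by simp [mul_comm]
    _ ≤ (∑ n ∈ s, u n ^ p) ^ (1/p) * (∑ n ∈ s, v n ^ q) ^ (1/q) := h1
    _ ≤ A ^ (1/p) * B ^ (1/q) := by
        apply mul_le_mul h2 h3 (Real.rpow_nonneg (Finset.sum_nonneg fun i _ =>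
          Real.rpow_nonneg (hv0 i) _) _) (Real.rpow_nonneg hA0 _)
    _ = B ^ (1/q) * A ^ (1/p) := mul_comm _ _

/-- Hölder bound: summability and a bound on the full series. -/
lemma aux_holder_tsum {p q : ℝ} (hpq : p.HolderConjugate q) (h v u : ℕ → ℝ)
    (hv0 : ∀ n, 0 ≤ v n) (hu0 : ∀ n, 0 ≤ u n)
    (hdom : ∀ n, |h n| ≤ v n * u n) {B A : ℝ}
    (hv : ∀ s : Finset ℕ, ∑ n ∈ s, v n ^ q ≤ B)
    (hu : ∀ s : Finset ℕ, ∑ n ∈ s, u n ^ p ≤ A) :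
    Summable h ∧ |∑' n, h n| ≤ B ^ (1/q) * A ^ (1/p) := by
  have habs : ∀ s : Finset ℕ, ∑ n ∈ s, |h n| ≤ B ^ (1/q) * A ^ (1/p) := fun s =>
    le_trans (Finset.sum_le_sum fun i _ => hdom i) (aux_holder_finset hpq v u hv0 hu0 hv hu s)
  have hsum : Summable fun n => |h n| :=
    summable_of_sum_le (fun n => abs_nonneg _) habs
  have hs : Summable h := summable_abs_iff.mp hsum
  refine ⟨hs, ?_⟩
  have h1 : ‖∑' n, h n‖ ≤ ∑' n, ‖h n‖ := norm_tsum_le_tsum_norm (f := h) (by simpa [Real.norm_eq_abs] using hsum)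
  simp only [Real.norm_eq_abs] at h1
  exact h1.trans (Summable.tsum_le_of_sum_le hsum habs)

/-- ℓ^p-duality on a finite set: if `h` is `≤ ε` on all `ℓ^p`-combinations of the `c n`,
`n ∈ s`, then the `ℓ^q` norm of `(h (c n))_{n ∈ s}` is at most `ε`. -/
lemma aux_lp_duality {p q : ℝ} (hpq : p.HolderConjugate q)
    {X : Type*} [NormedAddCommGroup X] [NormedSpace ℝ X]
    (h : X →L[ℝ] ℝ) (c : ℕ → X) (s : Finset ℕ) {ε : ℝ}
    (hε : ∀ t : ℕ → ℝ, (∑ n ∈ s, |t n| ^ p) ≤ 1 → |h (∑ n ∈ s, t n • c n)| ≤ ε) :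
    ∑ n ∈ s, |h (c n)| ^ q ≤ ε ^ q := by
  have hq1 : 1 < q := hpq.symm.lt
  have hq0 : 0 < q := hpq.symm.pos
  have hp0 : 0 < p := hpq.pos
  have hε0 : 0 ≤ ε := by
    have := hε (fun _ => 0) (by simp [Real.zero_rpow hp0.ne'])
    simpa using this
  set v : ℕ → ℝ := fun n => h (c n) with hv
  set M : ℝ := ∑ n ∈ s, |v n| ^ q with hM
  have hM0 : 0 ≤ M := Finset.sum_nonneg fun i _ => Real.rpow_nonneg (abs_nonneg _) _
  rcases eq_or_lt_of_le hM0 with hMz | hMpos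
  · rw [← hMz]
    exact Real.rpow_nonneg hε0 _
  -- nontrivial case
  have habs_pow : ∀ x : ℝ, |x| ^ (q - 1) * |x| = |x| ^ q := by
    intro x
    rcases eq_or_ne x 0 with hx | hx
    · simp [hx, Real.zero_rpow (by linarith : q - 1 ≠ 0), Real.zero_rpow hq0.ne']
    · have hx0 : (0:ℝ) < |x| := abs_pos.mpr hx
      nth_rewrite 2 [← Real.rpow_one |x|]
      rw [← Real.rpow_add hx0]
      norm_num
  set t : ℕ → ℝ := fun n =>
    (if 0 ≤ v n then |v n| ^ (q - 1) else -(|v n| ^ (q - 1))) / M ^ (1/p) with ht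
  have hMp_pos : (0:ℝ) < M ^ (1/p) := Real.rpow_pos_of_pos hMpos _
  have htabs : ∀ n, |t n| = |v n| ^ (q - 1) / M ^ (1/p) := by
    intro n
    rw [ht]
    simp only [abs_div, abs_of_pos hMp_pos]
    congr 1
    split_ifs <;> simp [abs_of_nonneg (Real.rpow_nonneg (abs_nonneg _) _)]
  have htv : ∀ n, t n * v n = |v n| ^ q / M ^ (1/p) := by
    intro n
    rw [ht]
    simp only
    split_ifs with hn
    · rw [div_mul_eq_mul_div]
      congr 1
      nth_rewrite 2 [← abs_of_nonneg hn]
      exact habs_pow (v n)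
    · rw [neg_div, neg_mul, div_mul_eq_mul_div, ← neg_div]
      congr 1
      have hvn : v n = -|v n| := by rw [abs_of_neg (lt_of_not_ge hn)]; ring
      nth_rewrite 2 [hvn]
      rw [mul_neg, neg_neg, habs_pow (v n)]
  have htp : ∑ n ∈ s, |t n| ^ p = 1 := by
    have hqp : (q - 1) * p = q := by
      have := hpq.sub_one_mul_conj  -- (p-1) * q = p
      nlinarith [hpq.mul_eq_add]
    have : ∀ n, |t n| ^ p = |v n| ^ q / M := by
      intro n
      rw [htabs n, Real.div_rpow (Real.rpow_nonneg (abs_nonneg _) _) hMp_pos.le]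
      congr 1
      · rw [← Real.rpow_mul (abs_nonneg _), hqp]
      · rw [← Real.rpow_mul hM0]
        field_simp
        exact Real.rpow_one M
    rw [Finset.sum_congr rfl fun n _ => this n, ← Finset.sum_div, ← hM, div_self hMpos.ne']
  have hval : h (∑ n ∈ s, t n • c n) = M ^ (1 - 1/p) := by
    rw [map_sum]
    have : ∀ n ∈ s, h (t n • c n) = t n * v n := by
      intro n _
      rw [map_smul, smul_eq_mul, hv]
    rw [Finset.sum_congr rfl this, Finset.sum_congr rfl fun n _ => htv n, ← Finset.sum_div, ← hM,
      Real.rpow_sub hMpos, Real.rpow_one]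
  have hle := hε t (le_of_eq htp)
  rw [hval] at hle
  have h1q : 1 - 1/p = 1/q := by
    have := hpq.inv_add_inv_eq_one
    field_simp at this ⊢
    linarith
  rw [h1q, abs_of_nonneg (Real.rpow_nonneg hM0 _)] at hle
  calc M = (M ^ (1/q)) ^ q := by
        rw [one_div, Real.rpow_inv_rpow hM0 hq0.ne']
    _ ≤ ε ^ q := Real.rpow_le_rpow (Real.rpow_nonneg hM0 _) hle hq0.le

/-- From the finite-family p-summing inequality to an `ℓ^q` bound over arbitrary finsets. -/
lemma aux_summing_bound {q : ℝ} (hq : 0 < q)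
    {X Z : Type*} [NormedAddCommGroup X] [NormedSpace ℝ X]
    [NormedAddCommGroup Z] [NormedSpace ℝ Z] {U : X →L[ℝ] Z} {C : ℝ} (hC : 0 ≤ C)
    (hU : PSummingLE q U C) (x : ℕ → X) {W : ℝ} (hW : 0 ≤ W)
    (hw : ∀ f : StrongDual ℝ X, ‖f‖ ≤ 1 → ∀ s : Finset ℕ, ∑ n ∈ s, |f (x n)| ^ q ≤ W ^ q) :
    ∀ s : Finset ℕ, ∑ n ∈ s, ‖U (x n)‖ ^ q ≤ (C * W) ^ q := by
  intro s
  set e := s.equivFin with he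
  set y : Fin s.card → X := fun i => x ((e.symm i : s) : ℕ) with hy
  have hsum_eq : ∀ F : ℕ → ℝ, ∑ i, F (((e.symm i : s)) : ℕ) = ∑ n ∈ s, F n := by
    intro F
    rw [← Finset.sum_coe_sort s F]
    exact Equiv.sum_comp e.symm (fun v : s => F (v : ℕ))
  have key := hU s.card y
  have hwk : weakLpNorm q y ≤ W := by
    apply csSup_le
    · refine ⟨(∑ i, |(0 : StrongDual ℝ X) (y i)| ^ q) ^ (1/q), 0, by simp, rfl⟩
    · rintro r ⟨f, hf, rfl⟩
      have h1 : ∑ i, |f (y i)| ^ q = ∑ n ∈ s, |f (x n)| ^ q := hsum_eq fun n => |f (x n)| ^ q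
      calc (∑ i, |f (y i)| ^ q) ^ (1/q) ≤ (W ^ q) ^ (1/q) := by
            apply Real.rpow_le_rpow (Finset.sum_nonneg fun i _ => Real.rpow_nonneg (abs_nonneg _) _)
              (h1 ▸ hw f hf s) (by positivity)
        _ = W := by rw [one_div, Real.rpow_rpow_inv hW hq.ne']
  have h2 : (∑ i, ‖U (y i)‖ ^ q) ^ (1/q) ≤ C * W :=
    key.trans (mul_le_mul_of_nonneg_left hwk hC)
  have h3 : ∑ i, ‖U (y i)‖ ^ q = ∑ n ∈ s, ‖U (x n)‖ ^ q := hsum_eq fun n => ‖U (x n)‖ ^ q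
  have h4 : (0:ℝ) ≤ ∑ i, ‖U (y i)‖ ^ q :=
    Finset.sum_nonneg fun i _ => Real.rpow_nonneg (norm_nonneg _) _
  calc ∑ n ∈ s, ‖U (x n)‖ ^ q = ((∑ i, ‖U (y i)‖ ^ q) ^ (1/q)) ^ q := by
        rw [one_div, Real.rpow_inv_rpow h4 hq.ne', h3]
    _ ≤ (C * W) ^ q := Real.rpow_le_rpow (Real.rpow_nonneg h4 _) h2 hq.le

/-- Finite rank operators decompose as finite sums of rank one operators. -/
lemma aux_finrank_decomp {X : Type*} [NormedAddCommGroup X] [NormedSpace ℝ X]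
    (R : X →L[ℝ] X) (hR : IsFiniteRank R) :
    ∃ (m : ℕ) (φ : Fin m → StrongDual ℝ X) (v : Fin m → X), ∀ x, R x = ∑ j, φ j x • v j := by
  haveI : FiniteDimensional ℝ (LinearMap.range (R : X →ₗ[ℝ] X)) := hR
  set V := LinearMap.range (R : X →ₗ[ℝ] X) with hV
  set bV := Module.finBasis ℝ V with hbV
  set Rc : X →L[ℝ] V := R.codRestrict V (fun x => LinearMap.mem_range_self _ x) with hRc
  refine ⟨Module.finrank ℝ V,
    fun j => (LinearMap.toContinuousLinearMap (bV.coord j)).comp Rc,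
    fun j => ((bV j : V) : X), ?_⟩
  intro x
  have h1 : R x = ((Rc x : V) : X) := rfl
  rw [h1, ← Module.Basis.sum_repr bV (Rc x)]
  rw [Submodule.coe_sum]
  apply Finset.sum_congr rfl
  intro j _
  rw [Submodule.coe_smul]
  simp [Module.Basis.coord_apply]

/-- Construction of a monotone weight sequence `μ n → ∞`, `μ n ≥ 1`,
with `∑ μ n ^ p * u n < ∞`. -/
lemma aux_mu {p : ℝ} (hp : 0 < p) (u : ℕ → ℝ) (hu0 : ∀ n, 0 ≤ u n) (hu : Summable u) :
    ∃ μ : ℕ → ℝ, (∀ n, 1 ≤ μ n) ∧ Monotone μ ∧ Tendsto μ atTop atTop ∧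
      Summable (fun n => μ n ^ p * u n) := by
  set T : ℕ → ℝ := fun n => ∑' k, u (k + n) with hT
  have hTs : ∀ n, Summable fun k => u (k + n) := fun n => (summable_nat_add_iff n).mpr hu
  have hT0 : ∀ n, 0 ≤ T n := fun n => tsum_nonneg fun k => hu0 _
  have hTsucc : ∀ n, T n = u n + T (n + 1) := by
    intro n
    have h1 := Summable.tsum_eq_zero_add (hTs n)
    have h2 : ∑' k, u (k + 1 + n) = T (n + 1) := by
      apply tsum_congr; intro k; congr 1; omega
    rw [hT]
    simp only
    rw [h1, h2, zero_add]
  have hTanti : Antitone T := antitone_nat_of_succ_le fun n => by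
    rw [hTsucc n]; linarith [hu0 n]
  set A : ℕ → ℝ := fun n => T n + (1/2) ^ n with hA
  have hApos : ∀ n, 0 < A n := fun n => by
    have : (0:ℝ) < (1/2)^n := by positivity
    simp only [hA]; linarith [hT0 n]
  have hAanti : Antitone A := by
    apply antitone_nat_of_succ_le
    intro n
    have h1 : T (n+1) ≤ T n := hTanti (Nat.le_succ n)
    have h2 : ((1:ℝ)/2) ^ (n+1) ≤ (1/2)^n := by
      apply pow_le_pow_of_le_one (by norm_num) (by norm_num) (Nat.le_succ n)
    simp only [hA]; linarith
  have hA0le : ∀ n, A n ≤ A 0 := fun n => hAanti (Nat.zero_le n)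
  have hAtop : Tendsto A atTop (nhds 0) := by
    have h1 : Tendsto T atTop (nhds 0) := tendsto_sum_nat_add u
    have h2 : Tendsto (fun n : ℕ => ((1:ℝ)/2) ^ n) atTop (nhds 0) :=
      tendsto_pow_atTop_nhds_zero_of_lt_one (by norm_num) (by norm_num)
    have h3 := h1.add h2
    rw [add_zero] at h3
    exact h3
  set ρ : ℕ → ℝ := fun n => A 0 / A n with hρ
  have hρ1 : ∀ n, 1 ≤ ρ n := fun n => (one_le_div (hApos n)).mpr (hA0le n)
  have hρ0 : ∀ n, 0 ≤ ρ n := fun n => le_trans zero_le_one (hρ1 n)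
  have hρmono : Monotone ρ := by
    intro m n hmn
    exact div_le_div_of_nonneg_left (hApos 0).le (hApos n) (hAanti hmn)
  have hρtop : Tendsto ρ atTop atTop := by
    have hA' : Tendsto A atTop (nhdsWithin 0 (Set.Ioi 0)) :=
      tendsto_nhdsWithin_of_tendsto_nhds_of_eventually_within A hAtop
        (Eventually.of_forall fun n => hApos n)
    have hinv : Tendsto (fun n => (A n)⁻¹) atTop atTop :=
      tendsto_inv_nhdsGT_zero.comp hA'
    have := hinv.const_mul_atTop (hApos 0)
    simpa [div_eq_mul_inv, hρ] using this
  clear_value T A ρ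
  -- the weight
  refine ⟨fun n => ρ n ^ (1/(2*p)), ?_, ?_, ?_, ?_⟩
  · intro n
    have := Real.rpow_le_rpow zero_le_one (hρ1 n) (by positivity : (0:ℝ) ≤ 1/(2*p))
    simpa using this
  · intro m n hmn
    exact Real.rpow_le_rpow (hρ0 m) (hρmono hmn) (by positivity)
  · apply (tendsto_rpow_atTop (by positivity : (0:ℝ) < 1/(2*p))).comp hρtop
  · -- summability
    have hkey : ∀ n, (ρ n ^ (1/(2*p))) ^ p * u n = Real.sqrt (A 0) * (u n / Real.sqrt (A n)) := by
      intro n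
      have h1 : (ρ n ^ (1/(2*p))) ^ p = ρ n ^ ((1/(2*p)) * p) :=
        (Real.rpow_mul (hρ0 n) _ _).symm
      have h2 : (1/(2*p)) * p = 1/2 := by field_simp
      rw [h1, h2, ← Real.sqrt_eq_rpow, hρ, Real.sqrt_div (hApos 0).le]
      rw [div_mul_eq_mul_div, mul_div_assoc]
    have hsq : Summable (fun n => u n / Real.sqrt (A n)) := by
      apply summable_of_sum_range_le (c := 2 * Real.sqrt (A 0))
      · intro n
        exact div_nonneg (hu0 n) (Real.sqrt_nonneg _)
      · intro n
        have hterm : ∀ k, u k / Real.sqrt (A k) ≤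
            2 * (Real.sqrt (A k) - Real.sqrt (A (k+1))) := by
          intro k
          have hx : 0 < Real.sqrt (A k) := Real.sqrt_pos.mpr (hApos k)
          have hy : 0 ≤ Real.sqrt (A (k+1)) := Real.sqrt_nonneg _
          have hxy : Real.sqrt (A (k+1)) ≤ Real.sqrt (A k) :=
            Real.sqrt_le_sqrt (hAanti (Nat.le_succ k))
          have hsub : u k ≤ A k - A (k+1) := by
            have h1 : A k - A (k+1) = u k + ((1/2)^k - (1/2)^(k+1)) := by
              simp only [hA]
              rw [hTsucc k]; ring
            have h2 : ((1:ℝ)/2)^(k+1) ≤ (1/2)^k :=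
              pow_le_pow_of_le_one (by norm_num) (by norm_num) (Nat.le_succ k)
            nlinarith [h1, h2]
          rw [div_le_iff₀ hx]
          have hsq1 : A k = Real.sqrt (A k) ^ 2 := (Real.sq_sqrt (hApos k).le).symm
          have hsq2 : A (k+1) = Real.sqrt (A (k+1)) ^ 2 := (Real.sq_sqrt (hApos (k+1)).le).symm
          nlinarith [hsub]
        calc ∑ k ∈ Finset.range n, u k / Real.sqrt (A k)
            ≤ ∑ k ∈ Finset.range n, 2 * (Real.sqrt (A k) - Real.sqrt (A (k+1))) :=
              Finset.sum_le_sum fun k _ => hterm k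
          _ = 2 * (Real.sqrt (A 0) - Real.sqrt (A n)) := by
              rw [← Finset.mul_sum, Finset.sum_range_sub' (fun k => Real.sqrt (A k))]
          _ ≤ 2 * Real.sqrt (A 0) := by
              have := Real.sqrt_nonneg (A n); linarith
    have := hsq.mul_left (Real.sqrt (A 0))
    apply this.congr
    intro n
    rw [hkey n]

end AuxLemmas

/-- Sum over `Fin N` of an `if`-restricted function equals the filtered sum. -/
lemma aux_fin_sum {M : Type*} [AddCommMonoid M] (N : ℕ) (s : Finset ℕ) (G : ℕ → M) :
    ∑ i : Fin N, (if (i : ℕ) ∈ s then G (i : ℕ) else 0) =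
      ∑ n ∈ s.filter (fun n => n < N), G n := by
  rw [Fin.sum_univ_eq_sum_range (fun n => if n ∈ s then G n else 0) N, ← Finset.sum_filter]
  congr 1
  ext n
  simp only [Finset.mem_filter, Finset.mem_range]
  tauto

/-- Corollary 2.5.  If `X` has the approximation property, then for every
`1 < p < ∞` and every Banach space `Y` the canonical map `Y*⊗̂_p X → N_p(Y,X)` is
injective. -/
theorem statement13
    (X : Type*) [NormedAddCommGroup X] [NormedSpace ℝ X] [CompleteSpace X]
    (hX : HasAP X) :
    ∀ p : ℝ, 1 < p →
      ∀ (Y : Type u) [NormedAddCommGroup Y] [NormedSpace ℝ Y] [CompleteSpace Y],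
        ∀ z : TensorRep p (ENNReal.ofReal (p / (p - 1))) Y X,
          (∀ y : Y, z.app y = 0) → z.IsZeroElem (p / (p - 1)) := by
  intro p hp Y _ _ _ z hz U hUps
  obtain ⟨C, hC0, hC⟩ := hUps
  obtain ⟨D, hDw⟩ := z.weak_b
  have hap' : Summable (fun n => ‖z.a n‖ ^ p) := z.summable_a
  have happ : ∀ y : Y, (∑' n, z.a n y • z.b n) = 0 := hz
  show (∑' n, U (z.b n) (z.a n)) = 0
  set a : ℕ → StrongDual ℝ Y := z.a with ha
  set b : ℕ → X := z.b with hb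
  clear_value a b
  clear ha hb hz z
  set q : ℝ := p / (p - 1) with hqdef
  have hpq : p.HolderConjugate q := Real.HolderConjugate.conjExponent hp
  have hp0 : 0 < p := hpq.pos
  have hq0 : 0 < q := hpq.symm.pos
  have hroot_p : ∀ x : ℝ, 0 ≤ x → (x ^ p) ^ (1/p) = x := fun x hx => by
    rw [one_div, Real.rpow_rpow_inv hx hp0.ne']
  have hroot_q : ∀ x : ℝ, 0 ≤ x → (x ^ q) ^ (1/q) = x := fun x hx => by
    rw [one_div, Real.rpow_rpow_inv hx hq0.ne']
  have hroot_q' : ∀ x : ℝ, 0 ≤ x → (x ^ (1/q)) ^ q = x := fun x hx => by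
    rw [one_div, Real.rpow_inv_rpow hx hq0.ne']
  -- finset form of the weak bound on (b n)
  have hDb : ∀ g : StrongDual ℝ X, ‖g‖ ≤ 1 → ∀ s : Finset ℕ, ∑ n ∈ s, |g (b n)| ^ q ≤ D := by
    intro g hg s
    rcases hDw g hg with h | h
    · exact absurd h.1 ENNReal.ofReal_ne_top
    · have h2 := h.2 s
      rwa [ENNReal.toReal_ofReal hq0.le] at h2
  have hD0 : 0 ≤ D := by simpa using hDb 0 (by simp) ∅
  have hap : Summable (fun n => ‖a n‖ ^ p) := hap'
  -- the weight sequence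
  obtain ⟨μ, hμ1, hμmono, hμtop, hμsum⟩ :=
    aux_mu hp0 (fun n => ‖a n‖ ^ p) (fun n => Real.rpow_nonneg (norm_nonneg _) _) hap
  have hμpos : ∀ n, 0 < μ n := fun n => lt_of_lt_of_le zero_lt_one (hμ1 n)
  set c : ℕ → X := fun n => (μ n)⁻¹ • b n with hc
  have hbc : ∀ n, b n = μ n • c n := by
    intro n
    rw [hc]
    simp only
    rw [smul_smul, mul_inv_cancel₀ (hμpos n).ne', one_smul]
  set SA : ℝ := ∑' n, μ n ^ p * ‖a n‖ ^ p with hSA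
  have hSAterm : ∀ n, (0:ℝ) ≤ μ n ^ p * ‖a n‖ ^ p := fun n =>
    mul_nonneg (Real.rpow_nonneg (hμpos n).le _) (Real.rpow_nonneg (norm_nonneg _) _)
  have hSA0 : 0 ≤ SA := tsum_nonneg hSAterm
  have hSAb : ∀ s : Finset ℕ, ∑ n ∈ s, (μ n * ‖a n‖) ^ p ≤ SA := by
    intro s
    have he : ∀ n, (μ n * ‖a n‖) ^ p = μ n ^ p * ‖a n‖ ^ p := fun n =>
      Real.mul_rpow (hμpos n).le (norm_nonneg _)
    rw [Finset.sum_congr rfl fun n _ => he n]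
    exact Summable.sum_le_tsum s (fun i _ => hSAterm i) hμsum
  set SA0 : ℝ := ∑' n, ‖a n‖ ^ p with hSA0def
  have hSA0b : ∀ s : Finset ℕ, ∑ n ∈ s, ‖a n‖ ^ p ≤ SA0 :=
    fun s => Summable.sum_le_tsum s (fun i _ => Real.rpow_nonneg (norm_nonneg _) _) hap
  -- weak bound for arbitrary functionals
  have hWb : ∀ f : StrongDual ℝ X, ∀ s : Finset ℕ, ∑ n ∈ s, |f (b n)| ^ q ≤ ‖f‖ ^ q * D := by
    intro f s
    rcases eq_or_ne f 0 with rfl | hf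
    · have : ∀ n ∈ s, |(0 : StrongDual ℝ X) (b n)| ^ q = 0 := by
        intro n _
        simp [Real.zero_rpow hq0.ne']
      rw [Finset.sum_congr rfl this, Finset.sum_const_zero]
      positivity
    · have hfpos : 0 < ‖f‖ := norm_pos_iff.mpr hf
      set g : StrongDual ℝ X := ‖f‖⁻¹ • f with hg
      have hgn : ‖g‖ ≤ 1 := by
        rw [hg, norm_smul, norm_inv, norm_norm, inv_mul_cancel₀ hfpos.ne']
      have h1 := hDb g hgn s
      have h2 : ∀ n, |f (b n)| ^ q = ‖f‖ ^ q * |g (b n)| ^ q := by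
        intro n
        have : f (b n) = ‖f‖ * g (b n) := by
          rw [hg]
          simp only [ContinuousLinearMap.smul_apply, smul_eq_mul]
          rw [← mul_assoc, mul_inv_cancel₀ hfpos.ne', one_mul]
        rw [this, abs_mul, abs_of_pos hfpos, Real.mul_rpow hfpos.le (abs_nonneg _)]
      rw [Finset.sum_congr rfl fun n _ => h2 n, ← Finset.mul_sum]
      exact mul_le_mul_of_nonneg_left h1 (Real.rpow_nonneg hfpos.le _)
  -- norms of ℓ^p-combinations of the (b n)
  have hcomb : ∀ (t : ℕ → ℝ) (s : Finset ℕ) (E : ℝ), 0 ≤ E → (∑ n ∈ s, |t n| ^ p) ≤ E →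
      ‖∑ n ∈ s, t n • b n‖ ≤ E ^ (1/p) * D ^ (1/q) := by
    intro t s E hE0 hE
    apply NormedSpace.norm_le_dual_bound ℝ _ (by positivity)
    intro f
    have h1 : f (∑ n ∈ s, t n • b n) = ∑ n ∈ s, t n * f (b n) := by
      rw [map_sum]
      exact Finset.sum_congr rfl fun n _ => by simp
    rw [Real.norm_eq_abs, h1]
    calc |∑ n ∈ s, t n * f (b n)| ≤ ∑ n ∈ s, |t n| * |f (b n)| := by
          refine (Finset.abs_sum_le_sum_abs _ _).trans ?_
          exact le_of_eq (Finset.sum_congr rfl fun n _ => abs_mul _ _)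
      _ ≤ (∑ n ∈ s, |t n| ^ p) ^ (1/p) * (∑ n ∈ s, |f (b n)| ^ q) ^ (1/q) :=
          Real.inner_le_Lp_mul_Lq_of_nonneg s hpq (fun i _ => abs_nonneg _)
            (fun i _ => abs_nonneg _)
      _ ≤ E ^ (1/p) * (‖f‖ ^ q * D) ^ (1/q) := by
          apply mul_le_mul
          · exact Real.rpow_le_rpow (Finset.sum_nonneg fun i _ =>
              Real.rpow_nonneg (abs_nonneg _) _) hE hpq.one_div_nonneg
          · exact Real.rpow_le_rpow (Finset.sum_nonneg fun i _ =>
              Real.rpow_nonneg (abs_nonneg _) _) (hWb f s) hpq.symm.one_div_nonneg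
          · exact Real.rpow_nonneg (Finset.sum_nonneg fun i _ =>
              Real.rpow_nonneg (abs_nonneg _) _) _
          · exact Real.rpow_nonneg hE0 _
      _ = E ^ (1/p) * D ^ (1/q) * ‖f‖ := by
          rw [Real.mul_rpow (Real.rpow_nonneg (norm_nonneg f) _) hD0,
            hroot_q ‖f‖ (norm_nonneg f)]
          ring
  -- summability of (a n y • b n) in X
  have hsumX : ∀ y : Y, Summable (fun n => a n y • b n) := by
    intro y
    rw [summable_iff_vanishing]
    intro V hV
    obtain ⟨δ, hδ0, hδ⟩ := Metric.mem_nhds_iff.mp hV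
    have hs1 : Summable (fun n => |a n y| ^ p) := by
      apply Summable.of_nonneg_of_le (fun n => Real.rpow_nonneg (abs_nonneg _) _)
        (fun n => ?_) (hap.mul_right (‖y‖ ^ p))
      calc |a n y| ^ p ≤ (‖a n‖ * ‖y‖) ^ p := by
            apply Real.rpow_le_rpow (abs_nonneg _) _ hp0.le
            simpa [Real.norm_eq_abs] using (a n).le_opNorm y
        _ = ‖a n‖ ^ p * ‖y‖ ^ p := Real.mul_rpow (norm_nonneg _) (norm_nonneg _)
    set δ' : ℝ := (δ/2 / (D ^ (1/q) + 1)) ^ p with hδ'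
    have hδ'0 : 0 < δ' := by
      apply Real.rpow_pos_of_pos
      positivity
    obtain ⟨s₀, hs₀⟩ := (summable_iff_vanishing.mp hs1) (Metric.ball 0 δ')
      (Metric.ball_mem_nhds 0 hδ'0)
    refine ⟨s₀, fun t hts => ?_⟩
    apply hδ
    rw [Metric.mem_ball, dist_zero_right]
    have h2 := hs₀ t hts
    rw [Metric.mem_ball, dist_zero_right, Real.norm_eq_abs] at h2
    have h3 : ∑ n ∈ t, |a n y| ^ p ≤ δ' := le_of_lt (lt_of_le_of_lt (le_abs_self _) h2)
    have h4 := hcomb (fun n => a n y) t δ' hδ'0.le h3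
    have hD1 : (0:ℝ) < D ^ (1/q) + 1 := by positivity
    calc ‖∑ n ∈ t, a n y • b n‖ ≤ δ' ^ (1/p) * D ^ (1/q) := h4
      _ = (δ/2 / (D ^ (1/q) + 1)) * D ^ (1/q) := by
          rw [hδ', hroot_p _ (by positivity)]
      _ < δ := by
          rw [div_mul_eq_mul_div, div_lt_iff₀ hD1]
          have hDq : (0:ℝ) ≤ D ^ (1/q) := Real.rpow_nonneg hD0 _
          nlinarith
  -- the key vanishing lemma for rank one building blocks
  have hzero : ∀ (x' : StrongDual ℝ X) (F : StrongDual ℝ (StrongDual ℝ Y)),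
      Summable (fun n => x' (b n) * F (a n)) ∧ (∑' n, x' (b n) * F (a n)) = 0 := by
    intro x' F
    have hwsum : Summable (fun n => x' (b n) • a n) := by
      apply Summable.of_norm
      have hd := aux_holder_tsum hpq (fun n => ‖x' (b n) • a n‖)
        (fun n => |x' (b n)|) (fun n => ‖a n‖) (fun n => abs_nonneg _)
        (fun n => norm_nonneg _) (fun n => ?_) (hWb x') hSA0b
      · exact hd.1
      · rw [abs_of_nonneg (norm_nonneg _), norm_smul, Real.norm_eq_abs]
    have hT : (∑' n, x' (b n) • a n) = 0 := by
      apply ContinuousLinearMap.ext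
      intro y
      have h1 : (ContinuousLinearMap.apply ℝ ℝ y) (∑' n, x' (b n) • a n)
          = ∑' n, (ContinuousLinearMap.apply ℝ ℝ y) (x' (b n) • a n) :=
        (ContinuousLinearMap.apply ℝ ℝ y).map_tsum hwsum
      have h1' : (∑' n, x' (b n) • a n) y = ∑' n, a n y * x' (b n) := by
        rw [show (∑' n, x' (b n) • a n) y
            = (ContinuousLinearMap.apply ℝ ℝ y) (∑' n, x' (b n) • a n) from rfl, h1]
        exact tsum_congr fun n => by simp [mul_comm]
      have h3 : Summable (fun n => a n y • b n) := hsumX y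
      have h4 : x' (∑' n, a n y • b n) = ∑' n, x' (a n y • b n) := x'.map_tsum h3
      have happy : (∑' n, a n y • b n) = 0 := happ y
      have h5 : ∑' n, a n y * x' (b n) = 0 := by
        rw [← tsum_congr (fun n => by simp : ∀ n, x' (a n y • b n) = a n y * x' (b n)),
          ← h4, happy, map_zero]
      rw [ContinuousLinearMap.zero_apply, h1', h5]
    have hFs : Summable (fun n => F (x' (b n) • a n)) := hwsum.mapL F
    have h7 : ∀ n, F (x' (b n) • a n) = x' (b n) * F (a n) := fun n => by simp
    constructor
    · exact hFs.congr h7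
    · rw [← tsum_congr h7, ← F.map_tsum hwsum, hT, map_zero]
  -- vanishing of the trace against U ∘ R for finite rank R
  have hvanish : ∀ R : X →L[ℝ] X, IsFiniteRank R →
      Summable (fun n => U (R (b n)) (a n)) ∧ (∑' n, U (R (b n)) (a n)) = 0 := by
    intro R hR
    obtain ⟨m, φ, v, hdecomp⟩ := aux_finrank_decomp R hR
    have hterm : ∀ n, U (R (b n)) (a n) = ∑ j, φ j (b n) * (U (v j)) (a n) := by
      intro n
      rw [hdecomp (b n), map_sum, ContinuousLinearMap.sum_apply]
      exact Finset.sum_congr rfl fun j _ => by simp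
    have hj : ∀ j, Summable (fun n => φ j (b n) * (U (v j)) (a n)) ∧
        (∑' n, φ j (b n) * (U (v j)) (a n)) = 0 := fun j => hzero (φ j) (U (v j))
    constructor
    · rw [show (fun n => U (R (b n)) (a n))
          = fun n => ∑ j, φ j (b n) * (U (v j)) (a n) from funext hterm]
      exact summable_sum fun j _ => (hj j).1
    · rw [tsum_congr hterm, Summable.tsum_finsetSum fun j _ => (hj j).1]
      exact Finset.sum_eq_zero fun j _ => (hj j).2
  -- summability of the trace itself
  have hUbB : ∀ s : Finset ℕ, ∑ n ∈ s, ‖U (b n)‖ ^ q ≤ (C * D ^ (1/q)) ^ q := by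
    apply aux_summing_bound hq0 hC0 hC b (Real.rpow_nonneg hD0 _)
    intro f hf s
    have h := hDb f hf s
    rwa [hroot_q' D hD0]
  have htrace := aux_holder_tsum hpq (fun n => U (b n) (a n)) (fun n => ‖U (b n)‖)
    (fun n => ‖a n‖) (fun n => norm_nonneg (U (b n))) (fun n => norm_nonneg _)
    (fun n => by simpa [Real.norm_eq_abs] using (U (b n)).le_opNorm (a n)) hUbB hSA0b
  -- the compact set K
  set S : Set X := {x | ∃ (s : Finset ℕ) (t : ℕ → ℝ),
    (∑ n ∈ s, |t n| ^ p) ≤ 1 ∧ x = ∑ n ∈ s, t n • c n} with hSdef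
  have hStb : TotallyBounded S := by
    rw [Metric.totallyBounded_iff]
    intro δ hδ
    obtain ⟨N, hN⟩ := (hμtop.eventually_ge_atTop (3 * (D ^ (1/q) + 1) / δ)).exists
    have htail : ∀ (t : ℕ → ℝ) (s : Finset ℕ), (∑ n ∈ s, |t n| ^ p) ≤ 1 →
        ‖∑ n ∈ s.filter (fun n => ¬ n < N), t n • c n‖ ≤ δ/3 := by
      intro t s ht
      set s' := s.filter (fun n => ¬ n < N) with hs'
      have h1 : ∀ n ∈ s', t n • c n = (t n * (μ n)⁻¹) • b n := by
        intro n _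
        rw [hc]
        simp only
        rw [smul_smul]
      rw [Finset.sum_congr rfl h1]
      have h2 : ∑ n ∈ s', |t n * (μ n)⁻¹| ^ p ≤ ((μ N)⁻¹) ^ p := by
        have hle : ∀ n ∈ s', |t n * (μ n)⁻¹| ^ p ≤ |t n| ^ p * ((μ N)⁻¹) ^ p := by
          intro n hn
          have hNn : N ≤ n := by
            rw [hs'] at hn
            have := (Finset.mem_filter.mp hn).2
            omega
          have hinv : (μ n)⁻¹ ≤ (μ N)⁻¹ :=
            inv_anti₀ (hμpos N) (hμmono hNn)
          rw [abs_mul, Real.mul_rpow (abs_nonneg _) (abs_nonneg _)]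
          apply mul_le_mul_of_nonneg_left _ (Real.rpow_nonneg (abs_nonneg _) _)
          apply Real.rpow_le_rpow (abs_nonneg _) _ hp0.le
          rw [abs_of_pos (inv_pos.mpr (hμpos n))]
          exact hinv
        calc ∑ n ∈ s', |t n * (μ n)⁻¹| ^ p ≤ ∑ n ∈ s', |t n| ^ p * ((μ N)⁻¹) ^ p :=
              Finset.sum_le_sum hle
          _ = (∑ n ∈ s', |t n| ^ p) * ((μ N)⁻¹) ^ p := by rw [Finset.sum_mul]
          _ ≤ 1 * ((μ N)⁻¹) ^ p := by
              apply mul_le_mul_of_nonneg_right _ (Real.rpow_nonneg (inv_nonneg.mpr (hμpos N).le) _)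
              refine le_trans ?_ ht
              apply Finset.sum_le_sum_of_subset_of_nonneg (Finset.filter_subset _ _)
              intro i _ _
              exact Real.rpow_nonneg (abs_nonneg _) _
          _ = ((μ N)⁻¹) ^ p := one_mul _
      have h3 := hcomb (fun n => t n * (μ n)⁻¹) s' (((μ N)⁻¹) ^ p)
        (Real.rpow_nonneg (inv_nonneg.mpr (hμpos N).le) _) h2
      have hμN : 0 < μ N := hμpos N
      calc ‖∑ n ∈ s', (t n * (μ n)⁻¹) • b n‖ ≤ (((μ N)⁻¹) ^ p) ^ (1/p) * D ^ (1/q) := h3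
        _ = (μ N)⁻¹ * D ^ (1/q) := by
            rw [hroot_p _ (inv_nonneg.mpr (hμpos N).le)]
        _ ≤ δ/3 := by
            rw [inv_mul_le_iff₀ hμN]
            have h5 : 3 * (D ^ (1/q) + 1) ≤ μ N * δ := by
              rw [div_le_iff₀ hδ] at hN
              linarith
            have hDq : (0:ℝ) ≤ D ^ (1/q) := Real.rpow_nonneg hD0 _
            nlinarith
    set Φ : (Fin N → ℝ) → X := fun t => ∑ i, t i • c (i : ℕ) with hΦ
    have hΦcont : Continuous Φ := by
      apply continuous_finset_sum
      intro i _
      exact (continuous_apply i).smul continuous_const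
    set Q : Set (Fin N → ℝ) := {t | ∑ i, |t i| ^ p ≤ 1} with hQ
    have hQc : IsCompact Q := by
      have hclosed : IsClosed Q := by
        apply isClosed_le _ continuous_const
        apply continuous_finset_sum
        intro i _
        exact ((continuous_apply i).abs).rpow_const fun t => Or.inr hp0.le
      have hsub : Q ⊆ Metric.closedBall 0 1 := by
        intro t ht
        rw [Metric.mem_closedBall, dist_zero_right]
        rw [pi_norm_le_iff_of_nonneg zero_le_one]
        intro i
        have h1 : |t i| ^ p ≤ 1 :=
          le_trans (Finset.single_le_sum
            (fun j _ => Real.rpow_nonneg (abs_nonneg _) _) (Finset.mem_univ i)) ht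
        rw [Real.norm_eq_abs]
        by_contra hgt
        push_neg at hgt
        have h2 : (1:ℝ) < |t i| ^ p :=
          (Real.one_lt_rpow_iff_of_pos (lt_trans zero_lt_one hgt)).mpr (Or.inl ⟨hgt, hp0⟩)
        linarith
      exact (isCompact_closedBall 0 1).of_isClosed_subset hclosed hsub
    have hC1 : IsCompact (Φ '' Q) := hQc.image hΦcont
    obtain ⟨F, hFfin, hFcov⟩ :=
      Metric.totallyBounded_iff.mp hC1.totallyBounded (δ/3) (by linarith)
    refine ⟨F, hFfin, ?_⟩
    rintro x ⟨s, t, ht, rfl⟩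
    have hsplit : ∑ n ∈ s, t n • c n =
        ∑ n ∈ s.filter (fun n => n < N), t n • c n
          + ∑ n ∈ s.filter (fun n => ¬ n < N), t n • c n :=
      (Finset.sum_filter_add_sum_filter_not s _ _).symm
    set head := ∑ n ∈ s.filter (fun n => n < N), t n • c n with hhead_def
    have hhead : head ∈ Φ '' Q := by
      refine ⟨fun i => if (i:ℕ) ∈ s then t (i:ℕ) else 0, ?_, ?_⟩
      · rw [hQ]
        simp only [Set.mem_setOf_eq]
        have he : ∀ i : Fin N, |if (i:ℕ) ∈ s then t (i:ℕ) else 0| ^ p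
            = (if (i:ℕ) ∈ s then |t (i:ℕ)| ^ p else 0) := by
          intro i
          split_ifs <;> simp [Real.zero_rpow hp0.ne']
        rw [Finset.sum_congr rfl fun i _ => he i,
          aux_fin_sum N s (fun n => |t n| ^ p)]
        refine le_trans ?_ ht
        apply Finset.sum_le_sum_of_subset_of_nonneg (Finset.filter_subset _ _)
        intro i _ _
        exact Real.rpow_nonneg (abs_nonneg _) _
      · rw [hΦ]
        simp only
        have he : ∀ i : Fin N, (if (i:ℕ) ∈ s then t (i:ℕ) else 0) • c (i:ℕ)
            = (if (i:ℕ) ∈ s then t (i:ℕ) • c (i:ℕ) else 0) := by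
          intro i
          split_ifs <;> simp
        rw [Finset.sum_congr rfl fun i _ => he i,
          aux_fin_sum N s (fun n => t n • c n)]
    have := hFcov hhead
    rw [Set.mem_iUnion₂] at this
    obtain ⟨y, hyF, hy⟩ := this
    refine Set.mem_iUnion₂.mpr ⟨y, hyF, ?_⟩
    rw [Metric.mem_ball]
    have hd1 : dist (∑ n ∈ s, t n • c n) head ≤ δ/3 := by
      rw [dist_eq_norm, hsplit, hhead_def, add_sub_cancel_left]
      exact htail t s ht
    rw [Metric.mem_ball] at hy
    calc dist (∑ n ∈ s, t n • c n) y
        ≤ dist (∑ n ∈ s, t n • c n) head + dist head y := dist_triangle _ _ _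
      _ < δ/3 + δ/3 := add_lt_add_of_le_of_lt hd1 hy
      _ < δ := by linarith
  set K : Set X := closure S with hKdef
  have hK : IsCompact K := TotallyBounded.isCompact_of_isClosed hStb.closure isClosed_closure
  -- the main estimate
  have key : ∀ ε : ℝ, 0 < ε → |∑' n, U (b n) (a n)| ≤ C * SA ^ (1/p) * ε := by
    intro ε hε
    obtain ⟨R, hRfin, hRK⟩ := hX K hK ε hε
    have hSsubK : S ⊆ K := subset_closure
    have hL9 : ∀ f : StrongDual ℝ X, ‖f‖ ≤ 1 → ∀ s : Finset ℕ,
        ∑ n ∈ s, |f (c n - R (c n))| ^ q ≤ ε ^ q := by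
      intro f hf s
      have hdual := aux_lp_duality hpq
        (f.comp (ContinuousLinearMap.id ℝ X - R)) c s (ε := ε) ?_
      · refine le_trans (le_of_eq ?_) hdual
        apply Finset.sum_congr rfl
        intro n _
        congr 2
      · intro t ht
        have hxS : (∑ n ∈ s, t n • c n) ∈ S := ⟨s, t, ht, rfl⟩
        have h1 := hRK _ (hSsubK hxS)
        set x₀ := ∑ n ∈ s, t n • c n with hx₀
        have h2 : (f.comp (ContinuousLinearMap.id ℝ X - R)) x₀ = f (x₀ - R x₀) := by simp
        rw [h2]
        calc |f (x₀ - R x₀)| ≤ ‖f‖ * ‖x₀ - R x₀‖ := by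
              simpa [Real.norm_eq_abs] using f.le_opNorm (x₀ - R x₀)
          _ ≤ 1 * ‖R x₀ - x₀‖ := by
              rw [norm_sub_rev]
              exact mul_le_mul_of_nonneg_right hf (norm_nonneg _)
          _ ≤ ε := by rw [one_mul]; exact h1
    have hUc : ∀ s : Finset ℕ, ∑ n ∈ s, ‖U (c n - R (c n))‖ ^ q ≤ (C * ε) ^ q :=
      aux_summing_bound hq0 hC0 hC (fun n => c n - R (c n)) hε.le hL9
    have hdom : ∀ n, |U (b n) (a n) - U (R (b n)) (a n)|
        ≤ ‖U (c n - R (c n))‖ * (μ n * ‖a n‖) := by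
      intro n
      have h1 : b n - R (b n) = μ n • (c n - R (c n)) := by
        rw [smul_sub, ← map_smul, ← hbc n]
      have h2 : U (b n) (a n) - U (R (b n)) (a n) = U (b n - R (b n)) (a n) := by
        rw [map_sub, ContinuousLinearMap.sub_apply]
      rw [h2, h1, map_smul, ContinuousLinearMap.smul_apply, smul_eq_mul, abs_mul,
        abs_of_pos (hμpos n)]
      calc μ n * |U (c n - R (c n)) (a n)|
          ≤ μ n * (‖U (c n - R (c n))‖ * ‖a n‖) := by
            apply mul_le_mul_of_nonneg_left _ (hμpos n).le
            simpa [Real.norm_eq_abs] using (U (c n - R (c n))).le_opNorm (a n)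
        _ = ‖U (c n - R (c n))‖ * (μ n * ‖a n‖) := by ring
    have hmain := aux_holder_tsum hpq
      (fun n => U (b n) (a n) - U (R (b n)) (a n))
      (fun n => ‖U (c n - R (c n))‖) (fun n => μ n * ‖a n‖)
      (fun n => norm_nonneg (U (c n - R (c n)))) (fun n => mul_nonneg (hμpos n).le (norm_nonneg _))
      hdom hUc hSAb
    have hv := hvanish R hRfin
    have heq : ∑' n, U (b n) (a n)
        = ∑' n, (U (b n) (a n) - U (R (b n)) (a n)) := by
      rw [Summable.tsum_sub htrace.1 hv.1, hv.2, sub_zero]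
    rw [heq]
    calc |∑' n, (U (b n) (a n) - U (R (b n)) (a n))|
        ≤ ((C * ε) ^ q) ^ (1/q) * SA ^ (1/p) := hmain.2
      _ = (C * ε) * SA ^ (1/p) := by
          rw [hroot_q _ (mul_nonneg hC0 hε.le)]
      _ = C * SA ^ (1/p) * ε := by ring
  -- conclusion
  by_contra hne
  have hpos : 0 < |∑' n, U (b n) (a n)| := abs_pos.mpr hne
  set d : ℝ := |∑' n, U (b n) (a n)| with hd
  set M0 : ℝ := C * SA ^ (1/p) with hM0
  have hM00 : 0 ≤ M0 := mul_nonneg hC0 (Real.rpow_nonneg hSA0 _)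
  have hk := key (d / (2 * (M0 + 1))) (by positivity)
  have h2 : M0 * (d / (2 * (M0 + 1))) = (M0 * d) / (2 * (M0 + 1)) := by ring
  rw [h2, le_div_iff₀ (by positivity)] at hk
  nlinarith
end
end
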